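/- Let G be a parity game. There exists a ⊑-least function ρ̄ : V → M_Even satisfying Lift(ρ̄,v) = ρ̄ for every v ∈ V; moreover, this ρ̄ is a game parity progress measure, and ρ̄ ⊑ ρ for every game parity progress measure ρ (so ρ̄ is the least game parity progress measure of G). -/

import Mathlib

open Classical

noncomputable section

instance (priority := 5000) (n : ℕ) : WellFoundedLT (Fin n) :=
  Finite.to_wellFoundedLT

noncomputable instance (priority := 5000) (n : ℕ) : LinearOrder (Lex (Fin n → ℕ)) :=
  inferInstance

/-- Least element of a set, if it exists; otherwise a default value. -/
def sLeast {α : Type*} [Preorder α] (s : Set α) (dflt : α) : α :=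
  if h : ∃ a, IsLeast s a then h.choose else dflt

/-- Greatest element of a set, if it exists; otherwise a default value. -/
def sGreatest {α : Type*} [Preorder α] (s : Set α) (dflt : α) : α :=
  if h : ∃ a, IsGreatest s a then h.choose else dflt

/-- A parity game: a finite set of vertices with a total edge relation, a priority
function and an ownership function (`ownerEven v = true` iff `v ∈ V_Even`). -/
structure ParityGame (V : Type*) [Fintype V] where
  E : V → V → Prop
  total : ∀ v, ∃ w, E v w
  prio : V → ℕ
  ownerEven : V → Bool

namespace ParityGame

variable {V : Type*} [Fintype V] [DecidableEq V] (G : ParityGame V)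

/-- `d` is one plus the maximal priority occurring in the game. -/
def d : ℕ := (Finset.univ.sup G.prio) + 1

/-- The domain of (extended) measures: `⊤` together with `d`-tuples of naturals,
ordered lexicographically with `⊤` maximal.  This is `M_Even_ext` (together with
tuples that are nonzero at even positions, which are never used). -/
abbrev Meas : Type _ := WithTop (Lex (Fin G.d → ℕ))

/-- `nP i` is the number of vertices of priority `i`. -/
def nP (i : ℕ) : ℕ := (Finset.univ.filter (fun v => G.prio v = i)).card

/-- Membership in `M_Even`: `⊤`, or a `d`-tuple which is `0` at even positions and
bounded by `nP i` at odd positions `i`. -/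
def inMEven (m : G.Meas) : Prop :=
  m = ⊤ ∨ ∃ f : Fin G.d → ℕ, m = ((toLex f : Lex (Fin G.d → ℕ)) : G.Meas) ∧
    ∀ i : Fin G.d, (Even (i : ℕ) → f i = 0) ∧ (¬ Even (i : ℕ) → f i ≤ G.nP (i : ℕ))

/-- Membership in `M_Even_ext`: `⊤`, or a `d`-tuple which is `0` at even positions. -/
def inMEvenExt (m : G.Meas) : Prop :=
  m = ⊤ ∨ ∃ f : Fin G.d → ℕ, m = ((toLex f : Lex (Fin G.d → ℕ)) : G.Meas) ∧
    ∀ i : Fin G.d, Even (i : ℕ) → f i = 0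

/-- Truncation of a measure to components `0, …, k` (other components set to `0`);
`⊤` is mapped to `⊤`. -/
def trunc (k : ℕ) (m : G.Meas) : G.Meas :=
  WithTop.map (fun f : Lex (Fin G.d → ℕ) => toLex (fun j : Fin G.d => if (j : ℕ) ≤ k then ofLex f j else 0)) m

/-- `a ≥_k b` : comparison of measures on components `0, …, k` only. -/
def geAt (k : ℕ) (a b : G.Meas) : Prop := G.trunc k b ≤ G.trunc k a

/-- `a >_k b` : strict comparison of measures on components `0, …, k` only. -/
def gtAt (k : ℕ) (a b : G.Meas) : Prop := G.trunc k b < G.trunc k a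

/-- The defining condition of `Prog(ρ,v,w)`. -/
def progCond (ρ : V → G.Meas) (v w : V) (m : G.Meas) : Prop :=
  if Even (G.prio v) then G.geAt (G.prio v) m (ρ w)
  else (G.gtAt (G.prio v) m (ρ w) ∨ (m = ⊤ ∧ ρ w = ⊤))

/-- `Prog(ρ,v,w)`: the least element of `M_Even` satisfying `progCond`. -/
def Prog (ρ : V → G.Meas) (v w : V) : G.Meas :=
  if h : ∃ m, IsLeast {m | G.inMEven m ∧ G.progCond ρ v w m} m then h.choose else ⊤

/-- `ρ` takes values in `M_Even`. -/
def IsMeasure (ρ : V → G.Meas) : Prop := ∀ v, G.inMEven (ρ v)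

/-- Game parity progress measure. -/
def IsGPM (ρ : V → G.Meas) : Prop :=
  G.IsMeasure ρ ∧ ∀ v,
    (G.ownerEven v = true → ∃ w, G.E v w ∧ G.geAt (G.prio v) (ρ v) (G.Prog ρ v w)) ∧
    (G.ownerEven v = false → ∀ w, G.E v w → G.geAt (G.prio v) (ρ v) (G.Prog ρ v w))

/-- A play: an infinite `E`-path. -/
def IsPlay (π : ℕ → V) : Prop := ∀ n, G.E (π n) (π (n + 1))

/-- Priority `p` occurs infinitely often on `π`. -/
def InfOft (π : ℕ → V) (p : ℕ) : Prop := ∀ N, ∃ n, N ≤ n ∧ G.prio (π n) = p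

/-- A play is won by Even iff the least priority occurring infinitely often is even. -/
def WonByEven (π : ℕ → V) : Prop := Even (sInf {p | G.InfOft π p})

/-- Won by player `i` (`true` = Even, `false` = Odd). -/
def WonBy (i : Bool) (π : ℕ → V) : Prop :=
  if i then G.WonByEven π else ¬ G.WonByEven π

/-- The history of a play before time `n`. -/
def hist (π : ℕ → V) (n : ℕ) : List V := List.ofFn (fun k : Fin n => π (k : ℕ))

/-- A (history-dependent) strategy for player `i` is valid if it always moves along edges
from vertices of player `i`. -/
def ValidStrat (i : Bool) (σ : List V → V → V) : Prop :=
  ∀ h v, G.ownerEven v = i → G.E v (σ h v)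

/-- Consistency of a play with a history-dependent strategy of player `i`. -/
def ConsH (i : Bool) (σ : List V → V → V) (π : ℕ → V) : Prop :=
  ∀ n, G.ownerEven (π n) = i → π (n + 1) = σ (hist π n) (π n)

/-- Consistency of a play with a positional strategy of player `i`. -/
def ConsP (i : Bool) (σ : V → V) (π : ℕ → V) : Prop :=
  ∀ n, G.ownerEven (π n) = i → π (n + 1) = σ (π n)

/-- Winning region of player `i`: vertices from which `i` has a winning strategy. -/
def WinRegion (i : Bool) : Set V :=
  {v | ∃ σ : List V → V → V, G.ValidStrat i σ ∧
    ∀ π, G.IsPlay π → π 0 = v → G.ConsH i σ π → G.WonBy i π}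

/-- The `i`-attractor into `U`. -/
def Attr (i : Bool) (U : Set V) : Set V :=
  ⋂₀ {A | U ⊆ A ∧
    (∀ v, G.ownerEven v = i → (∃ w, G.E v w ∧ w ∈ A) → v ∈ A) ∧
    (∀ v, G.ownerEven v ≠ i → (∀ w, G.E v w → w ∈ A) → v ∈ A)}

/-- The guarded attractor `Attr^{≥k}_{Odd,W}(U)`. -/
def GAttr (k : ℕ) (W U : Set V) : Set V :=
  ⋂₀ {A | U ⊆ A ∧ A ⊆ W ∩ {v | k ≤ G.prio v} ∧
    ∀ u ∈ W ∩ {v | k ≤ G.prio v},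
      (G.ownerEven u = false → (∃ w, G.E u w ∧ w ∈ A) → u ∈ A) ∧
      (G.ownerEven u = true → (∀ w, G.E u w → w ∈ W → w ∈ A) → u ∈ A)}

/-- The lifting operator `Lift(ρ, v)`. -/
def Lift (ρ : V → G.Meas) (v : V) : V → G.Meas :=
  Function.update ρ v
    (if G.ownerEven v = true
      then max (ρ v) (sLeast {m | ∃ w, G.E v w ∧ m = G.Prog ρ v w} ⊤)
      else max (ρ v) (sGreatest {m | ∃ w, G.E v w ∧ m = G.Prog ρ v w} ⊤))

/-- The all-zero measure. -/
def zeroMeas : G.Meas := ((toLex (fun _ : Fin G.d => 0) : Lex (Fin G.d → ℕ)) : G.Meas)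

/-- A lifting sequence `ρ₀, …, ρ_N` in which `v` is the first vertex lifted to `⊤`. -/
def FirstTop (ρs : ℕ → V → G.Meas) (N : ℕ) (v : V) : Prop :=
  (∀ u, ρs 0 u = G.zeroMeas) ∧
  (∀ j < N, ∃ u, ρs (j + 1) = G.Lift (ρs j) u ∧
    (∀ w, ρs j w ≤ ρs (j + 1) w) ∧ ρs j ≠ ρs (j + 1)) ∧
  (∀ j < N, ∀ w, ρs j w ≠ ⊤) ∧
  ρs N v = ⊤

/-- The prefix `π 0 … π l` of a play is an `i`-dominated stretch. -/
def domStretchPrefix (π : ℕ → V) (i l : ℕ) : Prop :=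
  (∀ m ≤ l, i ≤ G.prio (π m)) ∧ (∃ m ≤ l, G.prio (π m) = i)

/-- The degree of the prefix `π 0 … π l` with respect to priority `i`: the number of
its vertices of priority `i`. -/
def degree (π : ℕ → V) (i l : ℕ) : ℕ :=
  ((Finset.range (l + 1)).filter (fun m => G.prio (π m) = i)).card

/-- The value `θ(π)` of a play: `⊤` if `π` is won by Odd, and otherwise the tuple whose
component at each odd position `i` is the degree of the maximal `i`-dominated stretch
that is a prefix of `π` (and `0` if there is no such prefix). -/
def theta (π : ℕ → V) : G.Meas :=
  if G.WonByEven π then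
    ((toLex (fun j : Fin G.d =>
      if Even (j : ℕ) then 0
      else sSup {c | ∃ l, G.domStretchPrefix π (j : ℕ) l ∧ c = G.degree π (j : ℕ) l}) :
        Lex (Fin G.d → ℕ)) : G.Meas)
  else ⊤

/-- `U` is an `i`-dominion inside the subgame induced on `W`. -/
def IsDominionIn (W : Set V) (i : Bool) (U : Set V) : Prop :=
  ∃ σ : List V → V → V,
    (∀ h u, u ∈ W → G.ownerEven u = i → G.E u (σ h u) ∧ σ h u ∈ W) ∧
    ∀ π, G.IsPlay π → (∀ n, π n ∈ W) → π 0 ∈ U → G.ConsH i σ π →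
      (∀ n, π n ∈ U) ∧ G.WonBy i π

/-- `U` is an `i`-dominion in `G`. -/
def IsDominion (i : Bool) (U : Set V) : Prop := G.IsDominionIn Set.univ i U

/-- Winning region of player `i` in the subgame induced on `W`. -/
def WinIn (W : Set V) (i : Bool) : Set V :=
  {v | v ∈ W ∧ ∃ σ : List V → V → V,
    (∀ h u, u ∈ W → G.ownerEven u = i → G.E u (σ h u) ∧ σ h u ∈ W) ∧
    ∀ π, G.IsPlay π → (∀ n, π n ∈ W) → π 0 = v → G.ConsH i σ π → G.WonBy i π}

end ParityGame

open ParityGame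

namespace ParityGame

section Aux

variable {V : Type*} [Fintype V] [DecidableEq V] (G : ParityGame V)

lemma sLeast_spec' {α : Type*} [Preorder α] {s : Set α} {dflt : α}
    (h : ∃ a, IsLeast s a) : IsLeast s (sLeast s dflt) := by
  rw [sLeast, dif_pos h]; exact h.choose_spec

lemma sGreatest_spec' {α : Type*} [Preorder α] {s : Set α} {dflt : α}
    (h : ∃ a, IsGreatest s a) : IsGreatest s (sGreatest s dflt) := by
  rw [sGreatest, dif_pos h]; exact h.choose_spec

lemma lex_zero_le {d : ℕ} (g : Lex (Fin d → ℕ)) :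
    (toLex (fun _ => 0) : Lex (Fin d → ℕ)) ≤ g :=
  le_of_not_gt (by rintro ⟨i, -, hi⟩; exact Nat.not_lt_zero _ hi)

lemma zeroMeas_le (m : G.Meas) : G.zeroMeas ≤ m := by
  induction m using WithTop.recTopCoe with
  | top => exact le_top
  | coe g => exact WithTop.coe_le_coe.2 (lex_zero_le g)

lemma inMEven_zeroMeas : G.inMEven G.zeroMeas :=
  Or.inr ⟨fun _ => 0, rfl, fun _ => ⟨fun _ => rfl, fun _ => Nat.zero_le _⟩⟩

lemma trunc_top' (k : ℕ) : G.trunc k ⊤ = ⊤ := rfl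

lemma trunc_eq_top_iff {k : ℕ} {m : G.Meas} : G.trunc k m = ⊤ ↔ m = ⊤ := by
  induction m using WithTop.recTopCoe with
  | top => simp [ParityGame.trunc]
  | coe f => simp [ParityGame.trunc]

lemma lexTrunc_mono {k : ℕ} {f g : Lex (Fin G.d → ℕ)} (h : f ≤ g) :
    (toLex fun j : Fin G.d => if (j : ℕ) ≤ k then ofLex f j else 0) ≤
      (toLex fun j : Fin G.d => if (j : ℕ) ≤ k then ofLex g j else 0) := by
  rcases h.lt_or_eq with hlt | rfl
  · obtain ⟨i, hj, hi⟩ := hlt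
    by_cases hik : (i : ℕ) ≤ k
    · refine le_of_lt ⟨i, fun j hji => ?_, ?_⟩
      · have hjk : (j : ℕ) ≤ k := le_trans (le_of_lt hji) hik
        simpa [hjk] using hj j hji
      · simpa [hik] using hi
    · refine le_of_eq (congrArg toLex (funext fun j => ?_))
      by_cases hjk : (j : ℕ) ≤ k
      · have hji : j < i := Fin.lt_def.2 (lt_of_le_of_lt hjk (lt_of_not_ge hik))
        simp [hjk, hj j hji]
      · simp [hjk]
  · rfl

lemma trunc_mono {k : ℕ} {a b : G.Meas} (h : a ≤ b) : G.trunc k a ≤ G.trunc k b := by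
  induction b using WithTop.recTopCoe with
  | top => rw [G.trunc_top' k]; exact le_top
  | coe g =>
    induction a using WithTop.recTopCoe with
    | top => exact absurd (top_le_iff.1 h) WithTop.coe_ne_top
    | coe f =>
      rw [WithTop.coe_le_coe] at h
      simp only [ParityGame.trunc, WithTop.map_coe, WithTop.coe_le_coe]
      exact G.lexTrunc_mono h

lemma geAt_of_le {k : ℕ} {a b : G.Meas} (h : b ≤ a) : G.geAt k a b :=
  G.trunc_mono h

lemma inMEven_max {a b : G.Meas} (ha : G.inMEven a) (hb : G.inMEven b) :
    G.inMEven (max a b) := by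
  rcases max_choice a b with h | h <;> rw [h] <;> assumption

lemma progCond_top (ρ : V → G.Meas) (v w : V) : G.progCond ρ v w ⊤ := by
  unfold ParityGame.progCond
  split
  · show G.trunc _ (ρ w) ≤ G.trunc _ ⊤
    rw [G.trunc_top']; exact le_top
  · by_cases hw : ρ w = ⊤
    · exact Or.inr ⟨rfl, hw⟩
    · refine Or.inl ?_
      show G.trunc _ (ρ w) < G.trunc _ ⊤
      rw [G.trunc_top']
      exact lt_top_iff_ne_top.2 fun hc => hw (G.trunc_eq_top_iff.1 hc)

lemma exists_isLeast {s : Set G.Meas} (hs : s.Nonempty) : ∃ m, IsLeast s m := by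
  obtain ⟨a, ha, hmin⟩ :=
    (IsWellFounded.wf (r := ((· < ·) : G.Meas → G.Meas → Prop))).has_min s hs
  exact ⟨a, ha, fun b hb => not_lt.1 fun hlt => hmin b hb hlt⟩

lemma exists_isGreatest {s : Set G.Meas} (hf : s.Finite) (hs : s.Nonempty) :
    ∃ m, IsGreatest s m := by
  obtain ⟨a, ha, hmax⟩ := Set.Finite.exists_maximalFor id s hf hs
  exact ⟨a, ha, fun b hb => (le_total b a).elim id fun h => (hmax hb h)⟩

lemma Prog_isLeast (ρ : V → G.Meas) (v w : V) :
    IsLeast {m | G.inMEven m ∧ G.progCond ρ v w m} (G.Prog ρ v w) := by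
  have hne : ∃ m, IsLeast {m | G.inMEven m ∧ G.progCond ρ v w m} m :=
    G.exists_isLeast ⟨⊤, Or.inl rfl, G.progCond_top ρ v w⟩
  rw [ParityGame.Prog, dif_pos hne]; exact hne.choose_spec

lemma progCond_of_le {ρ ρ' : V → G.Meas} {v w : V} {m : G.Meas}
    (h : ρ w ≤ ρ' w) (hm : G.progCond ρ' v w m) : G.progCond ρ v w m := by
  unfold ParityGame.progCond at hm ⊢
  split at hm <;> rename_i he
  · rw [if_pos he]; exact le_trans (G.trunc_mono h) hm
  · rw [if_neg he]
    rcases hm with hm | ⟨hm1, hm2⟩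
    · exact Or.inl (lt_of_le_of_lt (G.trunc_mono h) hm)
    · by_cases hw : ρ w = ⊤
      · exact Or.inr ⟨hm1, hw⟩
      · refine Or.inl ?_
        subst hm1
        show G.trunc _ (ρ w) < G.trunc _ ⊤
        rw [G.trunc_top']
        exact lt_top_iff_ne_top.2 fun hc => hw (G.trunc_eq_top_iff.1 hc)

lemma Prog_mono {ρ ρ' : V → G.Meas} (h : ∀ u, ρ u ≤ ρ' u) (v w : V) :
    G.Prog ρ v w ≤ G.Prog ρ' v w :=
  (G.Prog_isLeast ρ v w).2
    ⟨(G.Prog_isLeast ρ' v w).1.1, G.progCond_of_le (h w) (G.Prog_isLeast ρ' v w).1.2⟩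

lemma Prog_le_self {ρ : V → G.Meas} {v w : V} {a : G.Meas} (ha : G.inMEven a)
    (h : G.geAt (G.prio v) a (G.Prog ρ v w)) : G.Prog ρ v w ≤ a := by
  refine (G.Prog_isLeast ρ v w).2 ⟨ha, ?_⟩
  have hc := (G.Prog_isLeast ρ v w).1.2
  have hga : G.trunc (G.prio v) (G.Prog ρ v w) ≤ G.trunc (G.prio v) a := h
  unfold ParityGame.progCond at hc ⊢
  split at hc <;> rename_i he
  · rw [if_pos he]; exact le_trans hc hga
  · rw [if_neg he]
    rcases hc with hc | ⟨hc1, hc2⟩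
    · exact Or.inl (lt_of_lt_of_le hc hga)
    · rw [hc1, G.trunc_top'] at hga
      exact Or.inr ⟨G.trunc_eq_top_iff.1 (top_le_iff.1 hga), hc2⟩

/-- The set of `Prog` values along edges from `v`. -/
def progSet (ρ : V → G.Meas) (v : V) : Set G.Meas :=
  {m | ∃ w, G.E v w ∧ m = G.Prog ρ v w}

lemma progSet_nonempty (ρ : V → G.Meas) (v : V) : (G.progSet ρ v).Nonempty :=
  let ⟨w, hw⟩ := G.total v
  ⟨G.Prog ρ v w, w, hw, rfl⟩

lemma progSet_finite (ρ : V → G.Meas) (v : V) : (G.progSet ρ v).Finite :=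
  Set.Finite.subset (Set.finite_range fun w => G.Prog ρ v w)
    (by rintro m ⟨w, -, rfl⟩; exact ⟨w, rfl⟩)

lemma sLeast_progSet (ρ : V → G.Meas) (v : V) :
    IsLeast (G.progSet ρ v) (sLeast (G.progSet ρ v) ⊤) :=
  sLeast_spec' (G.exists_isLeast (G.progSet_nonempty ρ v))

lemma sGreatest_progSet (ρ : V → G.Meas) (v : V) :
    IsGreatest (G.progSet ρ v) (sGreatest (G.progSet ρ v) ⊤) :=
  sGreatest_spec' (G.exists_isGreatest (G.progSet_finite ρ v) (G.progSet_nonempty ρ v))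

/-- The combined lifting operator. -/
def Phi (ρ : V → G.Meas) : V → G.Meas := fun v =>
  if G.ownerEven v = true
    then max (ρ v) (sLeast (G.progSet ρ v) ⊤)
    else max (ρ v) (sGreatest (G.progSet ρ v) ⊤)

lemma Lift_eq_update (ρ : V → G.Meas) (v : V) :
    G.Lift ρ v = Function.update ρ v (G.Phi ρ v) := rfl

lemma le_Phi (ρ : V → G.Meas) (v : V) : ρ v ≤ G.Phi ρ v := by
  unfold Phi; split <;> exact le_max_left _ _

lemma Phi_mono {ρ ρ' : V → G.Meas} (h : ∀ u, ρ u ≤ ρ' u) (v : V) :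
    G.Phi ρ v ≤ G.Phi ρ' v := by
  unfold Phi
  split
  · refine max_le (le_trans (h v) (le_max_left _ _)) (le_trans ?_ (le_max_right _ _))
    obtain ⟨⟨w, hw, heq⟩, -⟩ := G.sLeast_progSet ρ' v
    calc sLeast (G.progSet ρ v) ⊤ ≤ G.Prog ρ v w := (G.sLeast_progSet ρ v).2 ⟨w, hw, rfl⟩
      _ ≤ G.Prog ρ' v w := G.Prog_mono h v w
      _ = sLeast (G.progSet ρ' v) ⊤ := heq.symm
  · refine max_le (le_trans (h v) (le_max_left _ _)) (le_trans ?_ (le_max_right _ _))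
    obtain ⟨⟨w, hw, heq⟩, -⟩ := G.sGreatest_progSet ρ v
    calc sGreatest (G.progSet ρ v) ⊤ = G.Prog ρ v w := heq
      _ ≤ G.Prog ρ' v w := G.Prog_mono h v w
      _ ≤ sGreatest (G.progSet ρ' v) ⊤ := (G.sGreatest_progSet ρ' v).2 ⟨w, hw, rfl⟩

lemma inMEven_Phi {ρ : V → G.Meas} (h : G.IsMeasure ρ) (v : V) :
    G.inMEven (G.Phi ρ v) := by
  unfold Phi
  split
  · refine G.inMEven_max (h v) ?_
    obtain ⟨⟨w, -, heq⟩, -⟩ := G.sLeast_progSet ρ v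
    rw [heq]
    exact (G.Prog_isLeast ρ v w).1.1
  · refine G.inMEven_max (h v) ?_
    obtain ⟨⟨w, -, heq⟩, -⟩ := G.sGreatest_progSet ρ v
    rw [heq]
    exact (G.Prog_isLeast ρ v w).1.1

lemma finite_inMEven : {m : G.Meas | G.inMEven m}.Finite := by
  have h1 : (Set.pi Set.univ fun i : Fin G.d => Set.Iic (G.nP (i : ℕ))).Finite :=
    Set.Finite.pi fun _ => Set.finite_Iic _
  refine Set.Finite.subset (Set.Finite.insert ⊤ (Set.Finite.image
    (fun f : Fin G.d → ℕ => ((toLex f : Lex (Fin G.d → ℕ)) : G.Meas)) h1)) ?_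
  rintro m (rfl | ⟨f, rfl, hf⟩)
  · exact Set.mem_insert _ _
  · refine Set.mem_insert_iff.2 (Or.inr ⟨f, ?_, rfl⟩)
    intro i _
    by_cases hi : Even (i : ℕ)
    · rw [(hf i).1 hi]; exact Nat.zero_le _
    · exact (hf i).2 hi

lemma finite_measures : {ρ : V → G.Meas | G.IsMeasure ρ}.Finite :=
  Set.Finite.subset (Set.Finite.pi fun _ : V => G.finite_inMEven)
    (fun ρ hρ => fun v _ => hρ v)

end Aux

end ParityGame

/-- there is a least simultaneous fixpoint `ρ̄` of all the lifting
operators; it is a game parity progress measure and is below every game parity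
progress measure. -/
theorem least_lift_fixpoint_is_least_progress_measure
    {V : Type*} [Fintype V] [DecidableEq V] (G : ParityGame V) :
    ∃ ρbar : V → G.Meas, G.IsMeasure ρbar ∧
      (∀ v, G.Lift ρbar v = ρbar) ∧
      (∀ ρ : V → G.Meas, G.IsMeasure ρ → (∀ v, G.Lift ρ v = ρ) → ∀ v, ρbar v ≤ ρ v) ∧
      G.IsGPM ρbar ∧
      (∀ ρ : V → G.Meas, G.IsGPM ρ → ∀ v, ρbar v ≤ ρ v) := by
  classical
  -- the iteration of the combined lifting operator
  set ρ0 : V → G.Meas := fun _ => G.zeroMeas with hρ0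
  set seq : ℕ → V → G.Meas := fun n => G.Phi^[n] ρ0 with hseqdef
  have hseq_succ : ∀ n, seq (n + 1) = G.Phi (seq n) := fun n => by
    simp only [hseqdef, Function.iterate_succ_apply']
  have hmeas : ∀ n, G.IsMeasure (seq n) := by
    intro n
    induction n with
    | zero => exact fun v => G.inMEven_zeroMeas
    | succ n ih => rw [hseq_succ]; exact fun v => G.inMEven_Phi ih v
  have hstep : ∀ n v, seq n v ≤ seq (n + 1) v := fun n v => by
    rw [hseq_succ]; exact G.le_Phi _ v
  -- the iteration stabilizes
  obtain ⟨N, hN⟩ : ∃ n, seq (n + 1) = seq n := by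
    by_contra hc
    push_neg at hc
    have hsm : StrictMono seq :=
      strictMono_nat_of_lt_succ fun n =>
        lt_of_le_of_ne (fun v => hstep n v) (Ne.symm (hc n))
    have hsub : Set.range seq ⊆ {ρ : V → G.Meas | G.IsMeasure ρ} := by
      rintro _ ⟨n, rfl⟩; exact hmeas n
    exact (G.finite_measures.subset hsub).not_infinite
      (Set.infinite_range_of_injective hsm.injective)
  have hfix : G.Phi (seq N) = seq N := by rw [← hseq_succ]; exact hN
  -- fixpoints of `Phi` are exactly simultaneous fixpoints of `Lift`
  have lift_iff : ∀ ρ : V → G.Meas, (∀ v, G.Lift ρ v = ρ) ↔ G.Phi ρ = ρ := by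
    intro ρ
    constructor
    · intro h
      funext v
      have h2 := congrFun (h v) v
      rwa [G.Lift_eq_update, Function.update_self] at h2
    · intro h v
      rw [G.Lift_eq_update]
      exact Function.update_eq_self_iff.2 (congrFun h v)
  -- `seq N` is below every fixpoint of `Phi`
  have hleast : ∀ ρ : V → G.Meas, G.Phi ρ = ρ → ∀ v, seq N v ≤ ρ v := by
    intro ρ hfixρ
    have key : ∀ n v, seq n v ≤ ρ v := by
      intro n
      induction n with
      | zero => exact fun v => G.zeroMeas_le _
      | succ n ih =>
        intro v
        rw [hseq_succ]
        calc G.Phi (seq n) v ≤ G.Phi ρ v := G.Phi_mono ih v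
          _ = ρ v := congrFun hfixρ v
    exact key N
  have hfix' : ∀ v, G.Phi (seq N) v = seq N v := fun v => congrFun hfix v
  -- `seq N` is a game parity progress measure
  have hgpm : G.IsGPM (seq N) := by
    refine ⟨hmeas N, fun v => ⟨?_, ?_⟩⟩
    · intro hv
      obtain ⟨⟨w, hw, heq⟩, -⟩ := G.sLeast_progSet (seq N) v
      refine ⟨w, hw, ?_⟩
      have h1 : sLeast (G.progSet (seq N) v) ⊤ ≤ seq N v := by
        have h2 := hfix' v
        unfold ParityGame.Phi at h2
        rw [if_pos hv] at h2
        calc sLeast (G.progSet (seq N) v) ⊤ ≤ max (seq N v) (sLeast (G.progSet (seq N) v) ⊤) :=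
              le_max_right _ _
          _ = seq N v := h2
      exact G.geAt_of_le (heq ▸ h1)
    · intro hv w hw
      have hvne : ¬ G.ownerEven v = true := by simp [hv]
      have h2 := hfix' v
      unfold ParityGame.Phi at h2
      rw [if_neg hvne] at h2
      have h1 : sGreatest (G.progSet (seq N) v) ⊤ ≤ seq N v := by
        calc sGreatest (G.progSet (seq N) v) ⊤
            ≤ max (seq N v) (sGreatest (G.progSet (seq N) v) ⊤) := le_max_right _ _
          _ = seq N v := h2
      exact G.geAt_of_le (le_trans ((G.sGreatest_progSet (seq N) v).2 ⟨w, hw, rfl⟩) h1)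
  -- every game parity progress measure is a fixpoint of `Phi`
  have hgpmfix : ∀ ρ : V → G.Meas, G.IsGPM ρ → G.Phi ρ = ρ := by
    rintro ρ ⟨hm, hρ⟩
    funext v
    refine le_antisymm ?_ (G.le_Phi ρ v)
    unfold ParityGame.Phi
    split <;> rename_i hv
    · refine max_le le_rfl ?_
      obtain ⟨w, hw, hge⟩ := (hρ v).1 hv
      exact le_trans ((G.sLeast_progSet ρ v).2 ⟨w, hw, rfl⟩) (G.Prog_le_self (hm v) hge)
    · refine max_le le_rfl ?_
      obtain ⟨⟨w, hw, heq⟩, -⟩ := G.sGreatest_progSet ρ v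
      have hv' : G.ownerEven v = false := by
        cases h : G.ownerEven v
        · rfl
        · exact absurd h hv
      rw [heq]
      exact G.Prog_le_self (hm v) ((hρ v).2 hv' w hw)
  exact ⟨seq N, hmeas N, (lift_iff (seq N)).2 hfix,
    fun ρ _ hlift v => hleast ρ ((lift_iff ρ).1 hlift) v,
    hgpm, fun ρ hρ v => hleast ρ (hgpmfix ρ hρ) v⟩

end
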